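/- For any monoid variety V and any word w, the variety generated by the factor monoid M(w) is contained in V if and only if w is an isoterm for V, i.e., V satisfies no nontrivial identity of the form w ≈ v. -/

import Mathlib

abbrev Word := List ℕ

def subst (φ : ℕ → Word) (w : Word) : Word := w.flatMap φ

inductive Deduce (S : Set (Word × Word)) : Word → Word → Prop
  | refl (w : Word) : Deduce S w w
  | symm {u v : Word} : Deduce S u v → Deduce S v u
  | trans {u v w : Word} : Deduce S u v → Deduce S v w → Deduce S u w
  | step (a b : Word) (φ : ℕ → Word) {s t : Word} (h : (s, t) ∈ S) :
      Deduce S (a ++ subst φ s ++ b) (a ++ subst φ t ++ b)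

def FM (w : Word) : Type := Option {u : Word // u <:+: w}

def fmul {w : Word} : FM w → FM w → FM w
  | some u, some v =>
      if h : (u.1 ++ v.1) <:+: w then some ⟨u.1 ++ v.1, h⟩ else none
  | _, _ => none

def fone (w : Word) : FM w := some ⟨[], List.nil_infix⟩

theorem fmul_none_left {w : Word} (a : FM w) : fmul none a = none := rfl

theorem fmul_none_right {w : Word} (a : FM w) : fmul a none = none := by
  rcases a with _ | u <;> rfl

theorem fmul_some {w : Word} (u v : {u : Word // u <:+: w}) :
    fmul (some u) (some v) =
      if h : (u.1 ++ v.1) <:+: w then some ⟨u.1 ++ v.1, h⟩ else none := rfl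

theorem fmul_assoc {w : Word} (a b c : FM w) : fmul (fmul a b) c = fmul a (fmul b c) := by
  rcases a with _ | u
  · rfl
  rcases b with _ | v
  · rfl
  rcases c with _ | t
  · erw [fmul_none_right, fmul_none_right]
  rw [fmul_some, fmul_some]
  by_cases h : (u.1 ++ v.1 ++ t.1) <:+: w
  · have h1 : (u.1 ++ v.1) <:+: w := List.IsInfix.trans ⟨[], t.1, by simp⟩ h
    have h2 : (v.1 ++ t.1) <:+: w := List.IsInfix.trans ⟨u.1, [], by simp⟩ h
    rw [dif_pos h1, fmul_some, dif_pos h2, fmul_some, dif_pos h,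
      dif_pos (show (u.1 ++ (v.1 ++ t.1)) <:+: w by simpa [List.append_assoc] using h)]
    simp [List.append_assoc]
    rfl
  · by_cases h1 : (u.1 ++ v.1) <:+: w
    · rw [dif_pos h1, fmul_some, dif_neg h]
      by_cases h2 : (v.1 ++ t.1) <:+: w
      · rw [dif_pos h2, fmul_some,
          dif_neg (fun hh => h (by simpa [List.append_assoc] using hh))]
      · erw [dif_neg h2, fmul_none_right]
    · erw [dif_neg h1, fmul_none_left]
      by_cases h2 : (v.1 ++ t.1) <:+: w
      · rw [dif_pos h2, fmul_some,
          dif_neg (fun hh => h1 (List.IsInfix.trans ⟨[], t.1, by simp⟩ hh))]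
      · erw [dif_neg h2, fmul_none_right]

instance (w : Word) : Monoid (FM w) where
  mul := fmul
  one := fone w
  mul_assoc := fmul_assoc
  one_mul := by
    rintro (_ | u)
    · rfl
    · show fmul (fone w) (some u) = some u
      rw [fone, fmul_some, dif_pos (by simpa using u.2)]
      simp
      rfl
  mul_one := by
    rintro (_ | u)
    · rfl
    · show fmul (some u) (fone w) = some u
      rw [fone, fmul_some, dif_pos (by simpa using u.2)]
      simp
      rfl

def SatId (M : Type) [Monoid M] (p : Word × Word) : Prop :=
  ∀ φ : ℕ → M, (p.1.map φ).prod = (p.2.map φ).prod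

def VSat (E : Set (Word × Word)) (p : Word × Word) : Prop :=
  ∀ (M : Type) [Monoid M], (∀ q ∈ E, SatId M q) → SatId M p

def ids0 : Set (Word × Word) :=
  {([0,1,2,0,3,1],[1,0,2,0,3,1]), ([0,2,0,1,3,1],[0,2,1,0,3,1]), ([0,2,1,3,0,1],[0,2,1,3,1,0])}

def idA (n : ℕ) : Word × Word :=
  (List.replicate n 0 ++ (List.range n).map (· + 1),
   ((List.range n).map (fun i => [i + 1, 0])).flatten)

def rigid (e₀ : ℕ) (es : List ℕ) : Word :=
  List.replicate e₀ 0 ++ (((List.range es.length).zip es).map (fun p => (p.1 + 1) :: List.replicate p.2 0)).flatten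

def Bword (n i : ℕ) : Word := List.replicate i 0 ++ 1 :: List.replicate (n - 1 - i) 0

def wmr (m r : ℕ) : Word := rigid (m - 1) (List.replicate r (m - 1))

noncomputable def ev (w : Word) (u : Word) : FM w :=
  if h : u <:+: w then some ⟨u, h⟩ else none

theorem mul_def {w : Word} (a b : FM w) : a * b = fmul a b := rfl

theorem ev_nil (w : Word) : ev w [] = 1 := by
  erw [ev, dif_pos List.nil_infix]; rfl

theorem ev_append (w u v : Word) : ev w (u ++ v) = ev w u * ev w v := by
  rw [mul_def, ev, ev, ev]
  by_cases h : (u ++ v) <:+: w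
  · have h1 : u <:+: w := List.IsInfix.trans ⟨[], v, by simp⟩ h
    have h2 : v <:+: w := List.IsInfix.trans ⟨u, [], by simp⟩ h
    erw [dif_pos h, dif_pos h1, dif_pos h2, fmul_some, dif_pos h]
  · erw [dif_neg h]
    by_cases h1 : u <:+: w
    · erw [dif_pos h1]
      by_cases h2 : v <:+: w
      · erw [dif_pos h2, fmul_some, dif_neg h]
      · erw [dif_neg h2, fmul_none_right]
    · erw [dif_neg h1, fmul_none_left]

theorem ev_subst (w : Word) (ψ : ℕ → Word) (u : Word) :
    (u.map (fun x => ev w (ψ x))).prod = ev w (subst ψ u) := by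
  induction u with
  | nil => simp [subst, ev_nil]
  | cons a u ih =>
      simp only [List.map_cons, List.prod_cons, subst, List.flatMap_cons, ev_append] at *
      rw [ih]

theorem prod_subst (M : Type) [Monoid M] (θ : ℕ → M) (ψ : ℕ → Word) (u : Word) :
    ((subst ψ u).map θ).prod = (u.map (fun x => ((ψ x).map θ).prod)).prod := by
  induction u with
  | nil => simp [subst]
  | cons a u ih =>
      rw [subst, List.flatMap_cons, List.map_append, List.prod_append, List.map_cons,
        List.prod_cons]
      rw [subst] at ih
      rw [ih]

theorem vsat_factor (E : Set (Word × Word)) {s t : Word} (hst : (s, t) ∈ E)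
    (ψ : ℕ → Word) (a b : Word) :
    VSat E (a ++ subst ψ s ++ b, a ++ subst ψ t ++ b) := by
  intro M _ hM θ
  have h := hM _ hst (fun x => ((ψ x).map θ).prod)
  simp only [SatId] at h ⊢
  rw [List.map_append, List.map_append, List.prod_append, List.prod_append,
      List.map_append, List.map_append, List.prod_append, List.prod_append,
      prod_subst, prod_subst, h]

/-- For any monoid variety `V` (the class of monoids satisfying a set `E`
of identities) and any word `w`, the variety generated by the factor monoid `M(w)` is
contained in `V` (equivalently, `M(w)` satisfies all identities of `E`) iff `w` is an
isoterm for `V`. -/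

theorem stmt2 (w : Word) (E : Set (Word × Word)) :
    (∀ p ∈ E, SatId (FM w) p) ↔ (∀ v : Word, VSat E (w, v) → v = w) := by
  constructor
  · intro h v hv
    have hs := hv (FM w) h (fun x => ev w [x])
    simp only [SatId] at hs
    have e1 : ∀ u : Word, (u.map (fun x => ev w [x])).prod = ev w u := by
      intro u
      have := ev_subst w (fun x => [x]) u
      simpa [subst] using this
    rw [e1, e1] at hs
    erw [ev, dif_pos (List.infix_refl w)] at hs
    rw [ev] at hs
    by_cases hvw : v <:+: w
    · erw [dif_pos hvw] at hs
      exact congrArg Subtype.val (Option.some.inj hs.symm)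
    · erw [dif_neg hvw] at hs
      exact absurd hs (by simp)
  · rintro hiso ⟨s, t⟩ hst φ
    classical
    set ψ : ℕ → Word := fun x => match φ x with
      | some u => u.1
      | none => 0 :: w with hψ
    have hev : ∀ x, ev w (ψ x) = φ x := by
      intro x
      rcases hφx : φ x with _ | u
      · have : ¬ ((0 :: w) <:+: w) := by
          intro hh
          have := hh.length_le
          simp at this
        simp only [hψ, hφx]
        erw [ev, dif_neg this]
      · simp only [hψ, hφx]
        erw [ev, dif_pos u.2]
    have e1 : ∀ u : Word, (u.map φ).prod = ev w (subst ψ u) := by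
      intro u
      rw [← ev_subst]
      congr 1
      exact (List.map_congr_left (fun x _ => (hev x).symm))
    simp only [SatId]
    rw [e1, e1]
    by_cases hs2 : subst ψ s <:+: w
    · obtain ⟨a, b, hab⟩ := hs2
      have hv : VSat E (w, a ++ subst ψ t ++ b) := by
        rw [← hab]; exact vsat_factor E hst ψ a b
      have := hiso _ hv
      rw [← hab] at this
      have h3 : subst ψ t = subst ψ s :=
        List.append_cancel_right
          (List.append_cancel_left (by simpa only [List.append_assoc] using this))
      rw [h3]
    · by_cases ht2 : subst ψ t <:+: w
      · obtain ⟨a, b, hab⟩ := ht2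
        have hv : VSat E (w, a ++ subst ψ s ++ b) := by
          rw [← hab]
          intro M _ hM θ
          exact ((vsat_factor E hst ψ a b) M hM θ).symm
        have := hiso _ hv
        rw [← hab] at this
        have h3 : subst ψ s = subst ψ t :=
          List.append_cancel_right
            (List.append_cancel_left (by simpa only [List.append_assoc] using this))
        rw [h3]
      · erw [ev, ev, dif_neg hs2, dif_neg ht2]
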